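/- arXiv:2308.08035 — 6 statements merged into one kernel-verified Lean document; each statement's English description precedes it below -/
import Mathlib

section
/- For positive integers m and n, the number of pairs (i,i') with 0 ≤ i,i' < n and i ≡ i' (mod m) equals n + (2n - m)·⌊n/m⌋ - m·⌊n/m⌋². -/
/-- Number of pairs (i,i') with 0 ≤ i,i' < n and i ≡ i' (mod m). -/
def Cpairs (m n : ℕ) : ℕ :=
  ((Finset.range n ×ˢ Finset.range n).filter fun p => p.1 % m = p.2 % m).card

lemma count_res (m n : ℕ) (hm : 1 ≤ m) :
    ((Finset.range n).filter fun j => j % m = n % m).card = (Finset.range (n / m)).card := by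
  apply Finset.card_bij' (fun j _ => j / m) (fun k _ => n % m + k * m)
  · intro j hj
    simp only [Finset.mem_filter, Finset.mem_range] at hj
    simp only [Finset.mem_range]
    by_contra h
    push_neg at h
    have h1 : m * (n / m) ≤ m * (j / m) := Nat.mul_le_mul_left m h
    have h2 : m * (n / m) + n % m = n := Nat.div_add_mod n m
    have h3 : m * (j / m) + j % m = j := Nat.div_add_mod j m
    omega
  · intro k hk
    simp only [Finset.mem_range] at hk
    simp only [Finset.mem_filter, Finset.mem_range]
    have h1 : (k + 1) * m ≤ (n / m) * m := Nat.mul_le_mul_right m hk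
    have h2 : m * (n / m) + n % m = n := Nat.div_add_mod n m
    constructor
    · nlinarith
    · simp [Nat.add_mul_mod_self_right, Nat.mod_mod_of_dvd n (dvd_refl m)]
  · intro j hj
    simp only [Finset.mem_filter, Finset.mem_range] at hj
    rw [← hj.2]
    exact Nat.mod_add_div' j m
  · intro k hk
    rw [Nat.add_mul_div_right _ _ hm, Nat.div_eq_of_lt (Nat.mod_lt n hm)]
    simp

lemma count_res' (m n : ℕ) (hm : 1 ≤ m) :
    ((Finset.range n).filter fun j => j % m = n % m).card = n / m := by
  rw [count_res m n hm, Finset.card_range]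

lemma cpairs_succ (m n : ℕ) (hm : 1 ≤ m) :
    Cpairs m (n + 1) = Cpairs m n + 2 * (n / m) + 1 := by
  have key : ∀ N, Cpairs m N
      = ∑ i ∈ Finset.range N, ∑ j ∈ Finset.range N,
          if i % m = j % m then 1 else 0 := by
    intro N
    rw [Cpairs, Finset.card_filter, Finset.sum_product]
  have hcount : (∑ j ∈ Finset.range n, if n % m = j % m then 1 else 0) = n / m := by
    rw [← count_res' m n hm, Finset.card_filter]
    congr 1
    ext j
    simp [eq_comm]
  have hcount2 : (∑ i ∈ Finset.range n, if i % m = n % m then 1 else 0) = n / m := by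
    rw [← count_res' m n hm, Finset.card_filter]
  rw [key, key]
  simp only [Finset.sum_range_succ]
  rw [Finset.sum_add_distrib, hcount, hcount2]
  simp
  omega

lemma cpairs_formula (m : ℕ) (hm : 1 ≤ m) : ∀ n : ℕ,
    (Cpairs m n : ℤ) = (n : ℤ) + (2 * n - m) * (n / m : ℕ) - m * ((n / m : ℕ) : ℤ) ^ 2 := by
  intro n
  induction n with
  | zero => simp [Cpairs]
  | succ n ih =>
    rw [cpairs_succ m n hm]
    have hsd : (n + 1) / m = n / m + if m ∣ n + 1 then 1 else 0 := Nat.succ_div (a := n) (b := m)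
    by_cases h : m ∣ n + 1
    · have hq : (n + 1) / m = n / m + 1 := by rw [hsd, if_pos h]
      have hd : m * ((n + 1) / m) = n + 1 := Nat.mul_div_cancel' h
      rw [hq] at hd
      push_cast [hq, ih]
      push_cast at hd
      nlinarith [hd]
    · have hq : (n + 1) / m = n / m := by rw [hsd, if_neg h]; ring
      push_cast [hq, ih]
      ring

theorem stmt0 (m n : ℕ) (hm : 1 ≤ m) (hn : 1 ≤ n) :
    (Cpairs m n : ℤ) = (n : ℤ) + (2 * n - m) * (n / m : ℕ) - m * ((n / m : ℕ) : ℤ) ^ 2 := by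
  exact cpairs_formula m hm n
end

section
/- For the radical inverse function φ_b in base b ≥ 2 and nonnegative integers i, i', and any r ≥ 0: ⌊b^r φ_b(i)⌋ = ⌊b^r φ_b(i')⌋ if and only if i ≡ i' (mod b^r). -/
/-- The base-`b` radical inverse `φ_b(i) = ∑_ℓ a_ℓ b^{-(ℓ+1)}` where
`a_ℓ` are the base-`b` digits of `i`. -/
noncomputable def radInv (b i : ℕ) : ℝ :=
  ∑ ℓ ∈ Finset.range (Nat.digits b i).length,
    ((Nat.digits b i).getD ℓ 0 : ℝ) / (b : ℝ) ^ (ℓ + 1)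

private lemma getD_digits {b : ℕ} (hb : 2 ≤ b) :
    ∀ (ℓ i : ℕ), (Nat.digits b i).getD ℓ 0 = i / b ^ ℓ % b := by
  intro ℓ
  induction ℓ with
  | zero =>
    intro i
    rcases Nat.eq_zero_or_pos i with h | h
    · simp [h]
    · rw [Nat.digits_def' (by omega) h]; simp
  | succ ℓ IH =>
    intro i
    rcases Nat.eq_zero_or_pos i with h | h
    · simp [h]
    · rw [Nat.digits_def' (by omega) h]
      simp only [List.getD_cons_succ]
      rw [IH, Nat.div_div_eq_div_mul, ← pow_succ']

/-- integer part helper -/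
private def Nsum (b r i : ℕ) : ℕ :=
  ∑ ℓ ∈ Finset.range r, (i / b ^ ℓ % b) * b ^ (r - 1 - ℓ)

private lemma Nsum_succ {b : ℕ} (r i : ℕ) :
    Nsum b (r + 1) i = (i % b) * b ^ r + Nsum b r (i / b) := by
  unfold Nsum
  rw [Finset.sum_range_succ']
  simp only [pow_zero, Nat.div_one, Nat.add_sub_cancel, Nat.sub_zero]
  rw [add_comm]
  congr 1
  refine Finset.sum_congr rfl fun ℓ hℓ => ?_
  rw [Nat.div_div_eq_div_mul, ← pow_succ']
  congr 2
  omega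

private lemma Nsum_lt {b : ℕ} (hb : 2 ≤ b) : ∀ r i, Nsum b r i < b ^ r := by
  intro r
  induction r with
  | zero => intro i; simp [Nsum]
  | succ r IH =>
    intro i
    rw [Nsum_succ]
    have h1 := IH (i / b)
    have h2 : i % b < b := Nat.mod_lt _ (by omega)
    calc (i % b) * b ^ r + Nsum b r (i / b) < (i % b + 1) * b ^ r := by
          rw [add_mul, one_mul]; omega
      _ ≤ b * b ^ r := Nat.mul_le_mul_right _ (by omega)
      _ = b ^ (r + 1) := (pow_succ' b r).symm

private lemma Nsum_eq_iff {b : ℕ} (hb : 2 ≤ b) :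
    ∀ r i i', Nsum b r i = Nsum b r i' ↔ i % b ^ r = i' % b ^ r := by
  intro r
  induction r with
  | zero => intro i i'; simp [Nsum, Nat.mod_one]
  | succ r IH =>
    intro i i'
    have hB : 0 < b ^ r := pow_pos (by omega) r
    have h1 := Nsum_lt hb r (i / b)
    have h2 := Nsum_lt hb r (i' / b)
    rw [Nsum_succ, Nsum_succ, pow_succ', Nat.mod_mul, Nat.mod_mul]
    constructor
    · intro h
      have e : ∀ j u, u < b ^ r → (j % b * b ^ r + u) % b ^ r = u := fun j u hu => by
        rw [add_comm, Nat.add_mul_mod_self_right, Nat.mod_eq_of_lt hu]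
      have hu : Nsum b r (i / b) = Nsum b r (i' / b) := by
        have hc := congrArg (· % b ^ r) h
        rwa [e i _ h1, e i' _ h2] at hc
      have hx : i % b = i' % b := by
        have hmul : (i % b) * b ^ r = (i' % b) * b ^ r := by omega
        exact Nat.eq_of_mul_eq_mul_right hB hmul
      have hv : i / b % b ^ r = i' / b % b ^ r := (IH _ _).mp hu
      rw [hx, hv]
    · intro h
      have hx : i % b = i' % b := by
        have := congrArg (· % b) h
        simpa [Nat.add_mul_mod_self_left] using this
      have hv : i / b % b ^ r = i' / b % b ^ r := by
        have hm : b * (i / b % b ^ r) = b * (i' / b % b ^ r) := by omega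
        exact Nat.eq_of_mul_eq_mul_left (by omega) hm
      rw [hx, (IH _ _).mpr hv]

private lemma radInv_eq_sum {b : ℕ} (hb : 2 ≤ b) (i M : ℕ)
    (hM : (Nat.digits b i).length ≤ M) :
    radInv b i = ∑ ℓ ∈ Finset.range M, ((i / b ^ ℓ % b : ℕ) : ℝ) / (b : ℝ) ^ (ℓ + 1) := by
  unfold radInv
  simp only [getD_digits hb]
  refine Finset.sum_subset (Finset.range_subset_range.2 hM) fun ℓ _ hℓ => ?_
  simp only [Finset.mem_range, not_lt] at hℓ
  have hlt : i < b ^ ℓ := lt_of_lt_of_le (Nat.lt_base_pow_length_digits (by omega))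
    (Nat.pow_le_pow_right (by omega) hℓ)
  rw [Nat.div_eq_of_lt hlt]
  simp

private lemma radInv_nonneg {b : ℕ} (i : ℕ) : 0 ≤ radInv b i := by
  unfold radInv
  exact Finset.sum_nonneg fun ℓ _ => div_nonneg (by positivity) (by positivity)

private lemma sum_lt_one {b : ℕ} (hb : 2 ≤ b) :
    ∀ l : List ℕ, (∀ d ∈ l, d < b) →
      ∑ ℓ ∈ Finset.range l.length, ((l.getD ℓ 0 : ℕ) : ℝ) / (b : ℝ) ^ (ℓ + 1) < 1 := by
  have hbR : (0:ℝ) < b := by positivity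
  intro l
  induction l with
  | nil => intro _; simpa using one_pos
  | cons d t IH =>
    intro hl
    have hIH := IH fun x hx => hl x (List.mem_cons_of_mem _ hx)
    rw [List.length_cons, Finset.sum_range_succ']
    have heq : ∀ ℓ, (((d :: t).getD (ℓ + 1) 0 : ℕ) : ℝ) / (b : ℝ) ^ (ℓ + 1 + 1)
        = (1 / b) * (((t.getD ℓ 0 : ℕ) : ℝ) / (b : ℝ) ^ (ℓ + 1)) := by
      intro ℓ
      rw [List.getD_cons_succ]
      ring
    rw [Finset.sum_congr rfl fun ℓ _ => heq ℓ, ← Finset.mul_sum]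
    simp only [List.getD_cons_zero, zero_add, pow_one]
    have hd : (d : ℝ) ≤ (b : ℝ) - 1 := by
      have h0 : d < b := hl d List.mem_cons_self
      have h1 : (d : ℝ) + 1 ≤ (b : ℝ) := by exact_mod_cast h0
      linarith
    have h1 : (1 / (b:ℝ)) * ∑ ℓ ∈ Finset.range t.length,
        ((t.getD ℓ 0 : ℕ) : ℝ) / (b : ℝ) ^ (ℓ + 1) < 1 / b * 1 :=
      mul_lt_mul_of_pos_left hIH (by positivity)
    calc (1 / (b:ℝ)) * (∑ ℓ ∈ Finset.range t.length,
          ((t.getD ℓ 0 : ℕ) : ℝ) / (b : ℝ) ^ (ℓ + 1)) + (d:ℝ) / b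
        < 1 / b * 1 + ((b:ℝ) - 1) / b :=
          add_lt_add_of_lt_of_le h1 ((div_le_div_iff_of_pos_right hbR).mpr hd)
      _ = 1 := by field_simp; ring

private lemma radInv_lt_one {b : ℕ} (hb : 2 ≤ b) (i : ℕ) : radInv b i < 1 := by
  unfold radInv
  exact sum_lt_one hb _ fun d hd => Nat.digits_lt_base (by omega) hd

private lemma key {b : ℕ} (hb : 2 ≤ b) (r i : ℕ) :
    (b : ℝ) ^ r * radInv b i = (Nsum b r i : ℝ) + radInv b (i / b ^ r) := by
  have hbR : (0:ℝ) < b := by positivity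
  set L' := (Nat.digits b (i / b ^ r)).length with hL'
  have hiL : i < b ^ (r + L') := by
    have h1 : i / b ^ r < b ^ L' := Nat.lt_base_pow_length_digits (by omega)
    calc i < b ^ r * (i / b ^ r + 1) := Nat.lt_mul_div_succ i (pow_pos (by omega) r)
      _ ≤ b ^ r * b ^ L' := Nat.mul_le_mul_left _ (by omega)
      _ = b ^ (r + L') := (pow_add b r L').symm
  have hlen : (Nat.digits b i).length ≤ r + L' := by
    rcases Nat.eq_zero_or_pos i with h0 | h0
    · simp [h0]
    · rw [Nat.digits_len b i (by omega) (by omega)]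
      have := (Nat.log_lt_iff_lt_pow (by omega : 1 < b) (by omega : i ≠ 0)).2 hiL
      omega
  rw [radInv_eq_sum hb i (r + L') hlen, Finset.mul_sum, Finset.sum_range_add]
  congr 1
  · rw [Nsum, Nat.cast_sum]
    refine Finset.sum_congr rfl fun ℓ hℓ => ?_
    simp only [Finset.mem_range] at hℓ
    have hpow : (b:ℝ) ^ r = (b:ℝ) ^ (ℓ + 1) * (b:ℝ) ^ (r - 1 - ℓ) := by
      rw [← pow_add]; congr 1; omega
    push_cast
    rw [hpow]
    field_simp
  · rw [radInv_eq_sum hb (i / b ^ r) L' le_rfl]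
    refine Finset.sum_congr rfl fun ℓ hℓ => ?_
    rw [Nat.div_div_eq_div_mul, pow_add b r ℓ]
    have hpow : (b:ℝ) ^ (r + ℓ + 1) = (b:ℝ) ^ r * (b:ℝ) ^ (ℓ + 1) := by
      rw [← pow_add, Nat.add_assoc]
    rw [hpow]
    have hbne : (b:ℝ) ≠ 0 := ne_of_gt hbR
    field_simp

private lemma floor_key {b : ℕ} (hb : 2 ≤ b) (r i : ℕ) :
    ⌊(b : ℝ) ^ r * radInv b i⌋ = (Nsum b r i : ℤ) := by
  rw [key hb, Int.floor_natCast_add]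
  have h0 : ⌊radInv b (i / b ^ r)⌋ = 0 := by
    rw [Int.floor_eq_zero_iff]
    exact ⟨radInv_nonneg _, radInv_lt_one hb _⟩
  rw [h0, add_zero]

theorem stmt7 (b : ℕ) (hb : 2 ≤ b) (i i' r : ℕ) :
    ⌊(b : ℝ) ^ r * radInv b i⌋ = ⌊(b : ℝ) ^ r * radInv b i'⌋ ↔
      i % b ^ r = i' % b ^ r := by
  rw [floor_key hb, floor_key hb, Nat.cast_inj]
  exact Nsum_eq_iff hb r i i'
end

section
/- Define the unnormalized gain G̃_{u,k}(n) = ∑_{v⊆u} H_{u,v} C(m_{u,v,k}, n), where H_{u,v} = ∏_{j∈v} b_j ·(−1)^{|u∖v|}, m_{u,v,k} = ∏_{j∈v} b_j^{k_j+1} ∏_{j∈u∖v} b_j^{k_j}, and C(m,n) counts congruent pairs mod m among 0,…,n−1. If 1 ≤ n < ∏_{j∈u} b_j^{k_j}, then G̃_{u,k}(n) = n·∏_{j∈u}(b_j − 1); equivalently the normalized gain G_{u,k}(n) = G̃_{u,k}(n)/(n·∏_{j∈u}(b_j−1)) equals 1. -/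
/-- `m_{u,v,k} = ∏_{j∈v} b_j^{k_j+1} · ∏_{j∈u∖v} b_j^{k_j}`. -/
def mProd (b k : ℕ → ℕ) (u v : Finset ℕ) : ℕ :=
  (∏ j ∈ v, b j ^ (k j + 1)) * ∏ j ∈ u \ v, b j ^ k j

/-- Unnormalized gain `G̃_{u,k}(n) = ∑_{v⊆u} H_{u,v} C(m_{u,v,k}, n)`. -/
noncomputable def Gt (b k : ℕ → ℕ) (u : Finset ℕ) (n : ℕ) : ℝ :=
  ∑ v ∈ u.powerset,
    (∏ j ∈ v, (b j : ℝ)) * (-1) ^ (u \ v).card * (Cpairs (mProd b k u v) n : ℝ)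

/-- Normalized gain coefficient `G_{u,k}(n)`. -/
noncomputable def Gn (b k : ℕ → ℕ) (u : Finset ℕ) (n : ℕ) : ℝ :=
  Gt b k u n / (n * ∏ j ∈ u, ((b j : ℝ) - 1))

lemma Cpairs_of_le {m n : ℕ} (h : n ≤ m) : Cpairs m n = n := by
  unfold Cpairs
  have heq : ((Finset.range n ×ˢ Finset.range n).filter fun p => p.1 % m = p.2 % m)
      = (Finset.range n).image fun i => (i, i) := by
    ext p
    simp only [Finset.mem_filter, Finset.mem_product, Finset.mem_range,
      Finset.mem_image]
    constructor
    · rintro ⟨⟨h1, h2⟩, h3⟩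
      refine ⟨p.1, h1, ?_⟩
      have e1 : p.1 % m = p.1 := Nat.mod_eq_of_lt (lt_of_lt_of_le h1 h)
      have e2 : p.2 % m = p.2 := Nat.mod_eq_of_lt (lt_of_lt_of_le h2 h)
      have : p.1 = p.2 := by rw [← e1, ← e2, h3]
      exact Prod.ext rfl this
    · rintro ⟨i, hi, rfl⟩
      exact ⟨⟨hi, hi⟩, rfl⟩
  rw [heq, Finset.card_image_of_injective _ (fun a b h => by simpa using h),
    Finset.card_range]

lemma mProd_ge (b k : ℕ → ℕ) (u v : Finset ℕ) (hv : v ⊆ u)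
    (hb : ∀ j ∈ u, 2 ≤ b j) : (∏ j ∈ u, b j ^ k j) ≤ mProd b k u v := by
  unfold mProd
  have : (∏ j ∈ u, b j ^ k j) = (∏ j ∈ v, b j ^ k j) * ∏ j ∈ u \ v, b j ^ k j := by
    rw [← Finset.prod_union (Finset.disjoint_sdiff), Finset.union_sdiff_of_subset hv]
  rw [this]
  apply Nat.mul_le_mul_right
  apply Finset.prod_le_prod
  · intro i _; exact Nat.zero_le _
  · intro i hi
    have h2 : 2 ≤ b i := hb i (hv hi)
    calc b i ^ k i = b i ^ k i * 1 := (mul_one _).symm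
      _ ≤ b i ^ k i * b i := Nat.mul_le_mul_left _ (by omega)
      _ = b i ^ (k i + 1) := by ring

theorem stmt9 (u : Finset ℕ) (hu : u.Nonempty) (b k : ℕ → ℕ)
    (hb : ∀ j ∈ u, 2 ≤ b j)
    (hcop : ∀ i ∈ u, ∀ j ∈ u, i ≠ j → Nat.Coprime (b i) (b j))
    (n : ℕ) (hn1 : 1 ≤ n) (hn2 : n < ∏ j ∈ u, b j ^ k j) :
    Gt b k u n = (n : ℝ) * ∏ j ∈ u, ((b j : ℝ) - 1) ∧ Gn b k u n = 1 := by
  have hGt : Gt b k u n = (n : ℝ) * ∏ j ∈ u, ((b j : ℝ) - 1) := by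
    unfold Gt
    have hC : ∀ v ∈ u.powerset, Cpairs (mProd b k u v) n = n := by
      intro v hv
      rw [Finset.mem_powerset] at hv
      exact Cpairs_of_le (le_trans (le_of_lt hn2) (mProd_ge b k u v hv hb))
    rw [Finset.sum_congr rfl fun v hv => by rw [hC v hv]]
    have expand : ∏ j ∈ u, ((b j : ℝ) - 1)
        = ∑ v ∈ u.powerset, (∏ j ∈ v, (b j : ℝ)) * ∏ j ∈ u \ v, (-1 : ℝ) := by
      have := Finset.prod_add (fun j => (b j : ℝ)) (fun _ => (-1 : ℝ)) u
      simpa [sub_eq_add_neg] using this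
    rw [expand, Finset.mul_sum]
    apply Finset.sum_congr rfl
    intro v _
    rw [Finset.prod_const]
    ring
  refine ⟨hGt, ?_⟩
  unfold Gn
  rw [hGt]
  apply div_self
  apply mul_ne_zero
  · exact_mod_cast Nat.one_le_iff_ne_zero.mp hn1
  · apply Finset.prod_ne_zero_iff.mpr
    intro j hj
    have := hb j hj
    have : (2 : ℝ) ≤ (b j : ℝ) := by exact_mod_cast this
    linarith
end

section
/- Fix j* ∈ u and define k' from k by k'_{j*} = k_{j*} + 1 and k'_ℓ = k_ℓ otherwise. Then for all n ≥ 1, C(m_{u,v,k'}, b_{j*}·n) = b_{j*}·C(m_{u,v,k}, n) for every v ⊆ u, and consequently G_{u,k'}(b_{j*}·n) = G_{u,k}(n). -/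
def cnt (m n r : ℕ) : ℕ := ((Finset.range n).filter (fun i => i % m = r)).card

lemma Cpairs_eq_sum (m n : ℕ) (hm : 1 ≤ m) :
    Cpairs m n = ∑ r ∈ Finset.range m, (cnt m n r)^2 := by
  classical
  unfold Cpairs
  have hset : ((Finset.range n ×ˢ Finset.range n).filter fun p => p.1 % m = p.2 % m)
      = (Finset.range m).biUnion (fun r =>
          ((Finset.range n).filter (fun i => i % m = r)) ×ˢ
          ((Finset.range n).filter (fun i => i % m = r))) := by
    ext p
    simp only [Finset.mem_filter, Finset.mem_biUnion, Finset.mem_product, Finset.mem_range]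
    constructor
    · rintro ⟨⟨h1, h2⟩, h3⟩
      exact ⟨p.1 % m, Nat.mod_lt _ hm, ⟨h1, rfl⟩, ⟨h2, h3.symm⟩⟩
    · rintro ⟨r, _, ⟨h1, e1⟩, ⟨h2, e2⟩⟩
      exact ⟨⟨h1, h2⟩, e1.trans e2.symm⟩
  rw [hset, Finset.card_biUnion]
  · refine Finset.sum_congr rfl fun r _ => ?_
    rw [Finset.card_product, sq]
    rfl
  · intro r _ r' _ hrr
    rw [Function.onFun, Finset.disjoint_left]
    rintro p hp hp'
    simp only [Finset.mem_product, Finset.mem_filter] at hp hp'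
    exact hrr (hp.1.2.symm.trans hp'.1.2)

lemma cnt_scale (b m n t s : ℕ) (ht : t < m) (hs : s < b) :
    cnt (b*m) (b*n) (t*b+s) = cnt m n t := by
  classical
  have hb : 0 < b := lt_of_le_of_lt (Nat.zero_le s) hs
  unfold cnt
  refine Finset.card_bij' (fun i _ => i / b) (fun i _ => b * i + s) ?_ ?_ ?_ ?_
  · intro i hi
    simp only [Finset.mem_filter, Finset.mem_range] at hi ⊢
    obtain ⟨hin, him⟩ := hi
    have hdecomp : i = b * (i / (b*m) * m + t) + s := by
      have := Nat.div_add_mod i (b*m)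
      rw [him] at this
      nlinarith [this]
    constructor
    · exact Nat.div_lt_of_lt_mul hin
    · rw [hdecomp, Nat.mul_add_div hb, Nat.div_eq_of_lt hs, Nat.add_zero,
        add_comm, Nat.add_mul_mod_self_right]
      exact Nat.mod_eq_of_lt ht
  · intro i hi
    simp only [Finset.mem_filter, Finset.mem_range] at hi ⊢
    obtain ⟨hin, him⟩ := hi
    constructor
    · calc b * i + s < b * i + b := by omega
        _ = b * (i+1) := by ring
        _ ≤ b * n := Nat.mul_le_mul_left b hin
    · have hdecomp : b * i + s = (b*m) * (i / m) + (t*b+s) := by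
        have := Nat.div_add_mod i m
        rw [him] at this
        nlinarith [this]
      rw [hdecomp, Nat.mul_add_mod]
      exact Nat.mod_eq_of_lt (by nlinarith)

  · intro i hi
    simp only [Finset.mem_filter, Finset.mem_range] at hi
    obtain ⟨hin, him⟩ := hi
    have hib : i % b = s := by
      have h1 : i % b = (i % (b*m)) % b := (Nat.mod_mod_of_dvd i ⟨m, rfl⟩).symm
      rw [him, add_comm, Nat.add_mul_mod_self_right] at h1
      rw [h1]
      exact Nat.mod_eq_of_lt hs
    show b * (i / b) + s = i
    conv_rhs => rw [← Nat.div_add_mod i b, hib]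
  · intro i hi
    show (b * i + s) / b = i
    rw [Nat.mul_add_div hb, Nat.div_eq_of_lt hs]
    omega

lemma Cpairs_scale (b m n : ℕ) (hb : 0 < b) (hm : 0 < m) :
    Cpairs (b*m) (b*n) = b * Cpairs m n := by
  rw [Cpairs_eq_sum (b*m) (b*n) (Nat.one_le_iff_ne_zero.mpr (by positivity)),
      Cpairs_eq_sum m n hm]
  have hre : ∑ r ∈ Finset.range (b*m), (cnt (b*m) (b*n) r)^2
      = ∑ p ∈ Finset.range m ×ˢ Finset.range b, (cnt (b*m) (b*n) (p.1*b+p.2))^2 := by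
    refine Finset.sum_bij' (fun r _ => (r / b, r % b)) (fun p _ => p.1*b+p.2)
      ?_ ?_ ?_ ?_ ?_
    · intro r hr
      simp only [Finset.mem_range] at hr
      simp only [Finset.mem_product, Finset.mem_range]
      exact ⟨Nat.div_lt_of_lt_mul hr, Nat.mod_lt _ hb⟩
    · intro p hp
      simp only [Finset.mem_product, Finset.mem_range] at hp
      simp only [Finset.mem_range]
      calc p.1*b+p.2 < p.1*b+b := by omega
        _ = (p.1+1)*b := by ring
        _ ≤ m*b := Nat.mul_le_mul_right b hp.1
        _ = b*m := mul_comm m b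
    · intro r _
      show r / b * b + r % b = r
      rw [mul_comm (r/b) b]
      exact Nat.div_add_mod r b

    · intro p hp
      simp only [Finset.mem_product, Finset.mem_range] at hp
      have h1 : (p.1*b+p.2)/b = p.1 := by
        rw [mul_comm p.1 b, Nat.mul_add_div hb, Nat.div_eq_of_lt hp.2, Nat.add_zero]
      have h2 : (p.1*b+p.2)%b = p.2 := by
        rw [mul_comm p.1 b, Nat.mul_add_mod]
        exact Nat.mod_eq_of_lt hp.2
      show ((p.1*b+p.2)/b, (p.1*b+p.2)%b) = p
      rw [h1, h2]
    · intro r _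
      show (cnt (b*m) (b*n) r)^2 = (cnt (b*m) (b*n) (r/b*b + r%b))^2
      rw [mul_comm (r/b) b, Nat.div_add_mod]
  rw [hre, Finset.sum_product]
  rw [Finset.mul_sum]
  refine Finset.sum_congr rfl fun t ht => ?_
  simp only [Finset.mem_range] at ht
  calc ∑ s ∈ Finset.range b, (cnt (b*m) (b*n) (t*b+s))^2
      = ∑ s ∈ Finset.range b, (cnt m n t)^2 := by
        refine Finset.sum_congr rfl fun s hs => ?_
        rw [cnt_scale b m n t s ht (Finset.mem_range.mp hs)]
    _ = b * (cnt m n t)^2 := by rw [Finset.sum_const, Finset.card_range, smul_eq_mul]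

lemma mProd_update (b k : ℕ → ℕ) (u v : Finset ℕ) (jstar : ℕ) (hj : jstar ∈ u) (hv : v ⊆ u) :
    mProd b (Function.update k jstar (k jstar + 1)) u v = b jstar * mProd b k u v := by
  classical
  unfold mProd
  by_cases h : jstar ∈ v
  · have hnd : jstar ∉ u \ v := by simp [h]
    have h2 : ∏ j ∈ u \ v, b j ^ (Function.update k jstar (k jstar + 1) j)
        = ∏ j ∈ u \ v, b j ^ k j := by
      refine Finset.prod_congr rfl fun j hjv => ?_
      have hne : j ≠ jstar := by rintro rfl; exact hnd hjv
      rw [Function.update_of_ne hne _ k]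
    rw [h2, ← Finset.mul_prod_erase v _ h,
        ← Finset.mul_prod_erase v (fun j => b j ^ (k j + 1)) h]
    have h1 : ∏ j ∈ v.erase jstar, b j ^ (Function.update k jstar (k jstar + 1) j + 1)
        = ∏ j ∈ v.erase jstar, b j ^ (k j + 1) := by
      refine Finset.prod_congr rfl fun j hjv => ?_
      rw [Function.update_of_ne (Finset.ne_of_mem_erase hjv) _ k]
    rw [h1, Function.update_self, pow_succ]
    ring
  · have hd : jstar ∈ u \ v := Finset.mem_sdiff.mpr ⟨hj, h⟩
    have h1 : ∏ j ∈ v, b j ^ (Function.update k jstar (k jstar + 1) j + 1)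
        = ∏ j ∈ v, b j ^ (k j + 1) := by
      refine Finset.prod_congr rfl fun j hjv => ?_
      have hne : j ≠ jstar := by rintro rfl; exact h hjv
      rw [Function.update_of_ne hne _ k]
    rw [h1, ← Finset.mul_prod_erase (u \ v) _ hd,
        ← Finset.mul_prod_erase (u \ v) (fun j => b j ^ k j) hd]
    have h2 : ∏ j ∈ (u \ v).erase jstar, b j ^ (Function.update k jstar (k jstar + 1) j)
        = ∏ j ∈ (u \ v).erase jstar, b j ^ k j := by
      refine Finset.prod_congr rfl fun j hjv => ?_
      rw [Function.update_of_ne (Finset.ne_of_mem_erase hjv) _ k]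
    rw [h2, Function.update_self, pow_succ]
    ring

theorem stmt12 (u : Finset ℕ) (hu : u.Nonempty) (b k : ℕ → ℕ)
    (hb : ∀ j ∈ u, 2 ≤ b j)
    (hcop : ∀ i ∈ u, ∀ j ∈ u, i ≠ j → Nat.Coprime (b i) (b j))
    (jstar : ℕ) (hjstar : jstar ∈ u)
    (k' : ℕ → ℕ) (hk' : k' = Function.update k jstar (k jstar + 1))
    (n : ℕ) (hn : 1 ≤ n) :
    (∀ v ∈ u.powerset,
        Cpairs (mProd b k' u v) (b jstar * n) = b jstar * Cpairs (mProd b k u v) n) ∧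
      Gn b k' u (b jstar * n) = Gn b k u n := by
  have hbj : 0 < b jstar := lt_of_lt_of_le (by norm_num) (hb jstar hjstar)
  have key : ∀ v ∈ u.powerset,
      Cpairs (mProd b k' u v) (b jstar * n) = b jstar * Cpairs (mProd b k u v) n := by
    intro v hv
    rw [Finset.mem_powerset] at hv
    have hmpos : 0 < mProd b k u v := by
      unfold mProd
      refine Nat.mul_pos (Finset.prod_pos fun j hj => ?_) (Finset.prod_pos fun j hj => ?_)
      · exact pow_pos (lt_of_lt_of_le (by norm_num) (hb j (hv hj))) _
      · exact pow_pos (lt_of_lt_of_le (by norm_num) (hb j ((Finset.sdiff_subset) hj))) _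
    rw [hk', mProd_update b k u v jstar hjstar hv]
    exact Cpairs_scale (b jstar) (mProd b k u v) n hbj hmpos
  refine ⟨key, ?_⟩
  have hGt : Gt b k' u (b jstar * n) = (b jstar : ℝ) * Gt b k u n := by
    unfold Gt
    rw [Finset.mul_sum]
    refine Finset.sum_congr rfl fun v hv => ?_
    rw [key v hv]
    push_cast
    ring
  unfold Gn
  rw [hGt]
  have hbr : (b jstar : ℝ) ≠ 0 := by positivity
  rw [Nat.cast_mul]
  rw [show ((b jstar : ℝ) * (n : ℝ)) * ∏ j ∈ u, ((b j : ℝ) - 1)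
      = (b jstar : ℝ) * ((n : ℝ) * ∏ j ∈ u, ((b j : ℝ) - 1)) by ring]
  exact mul_div_mul_left _ _ hbr
end

section
/- For every nonempty u and every k ∈ ℕ₀^u, sup over n ∈ ℕ of G_{u,k}(n) equals sup over n ∈ ℕ of G_{u,0}(n), i.e., the supremum of the gain coefficients over sample sizes does not depend on k. -/
open Finset

/-! ### Auxiliary development -/

/-- `Sfun m n = ∑_{d≥1} (n - d m)⁺`, so that `Cpairs m n = n + 2 * Sfun m n`. -/
def Sfun (m n : ℕ) : ℕ := ∑ d ∈ Finset.Icc 1 n, (n - d * m)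

lemma Sfun_zero (m : ℕ) : Sfun m 0 = 0 := by simp [Sfun]

lemma Icc_filter_eq (m n : ℕ) (hm : 1 ≤ m) :
    ((Finset.Icc 1 n).filter fun d => d * m ≤ n) = Finset.Icc 1 (n / m) := by
  ext d
  simp only [mem_filter, mem_Icc]
  constructor
  · rintro ⟨⟨h1, _⟩, h3⟩
    exact ⟨h1, (Nat.le_div_iff_mul_le hm).2 h3⟩
  · rintro ⟨h1, h2⟩
    have h3 : d * m ≤ n := (Nat.le_div_iff_mul_le hm).1 h2
    exact ⟨⟨h1, le_trans h2 (Nat.div_le_self n m)⟩, h3⟩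

lemma Sfun_succ (m n : ℕ) (hm : 1 ≤ m) : Sfun m (n + 1) = Sfun m n + n / m := by
  have h0 : Sfun m (n+1) = ∑ d ∈ Finset.Icc 1 n, (n + 1 - d * m) := by
    rw [Sfun, ← Finset.insert_Icc_right_eq_Icc_add_one (by omega)]
    rw [Finset.sum_insert (by simp)]
    have h2 : n + 1 ≤ (n+1) * m := Nat.le_mul_of_pos_right _ hm
    have : n + 1 - (n+1) * m = 0 := by omega
    rw [this, zero_add]
  have h1 : ∀ d ∈ Finset.Icc 1 n, n + 1 - d * m = (n - d * m) + (if d * m ≤ n then 1 else 0) := by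
    intro d _
    rcases le_or_gt (d * m) n with h | h
    · simp [h]; omega
    · have h3 : n - d*m = 0 := by omega
      have h2 : n + 1 - d*m = 0 := by omega
      simp [h2, h3, Nat.not_le.2 h]
  rw [h0, Finset.sum_congr rfl h1, Finset.sum_add_distrib, ← Finset.card_filter,
    Icc_filter_eq m n hm, Nat.card_Icc, Sfun]
  simp

lemma Sfun_eq (m t : ℕ) (hm : 1 ≤ m) :
    Sfun m t = ∑ d ∈ Finset.Icc 1 (t / m), (t - d * m) := by
  rw [Sfun]
  apply (Finset.sum_subset ?_ ?_).symm
  · exact Finset.Icc_subset_Icc_right (Nat.div_le_self t m)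
  · intro d hd hnd
    simp only [mem_Icc] at hd hnd
    have : ¬ d * m ≤ t := fun h => hnd ⟨hd.1, (Nat.le_div_iff_mul_le hm).2 h⟩
    omega

lemma Sfun_scale (m B t r : ℕ) (hm : 1 ≤ m) (hB : 1 ≤ B) (hr : r < B) :
    Sfun (B * m) (t * B + r) = B * Sfun m t + r * (t / m) := by
  have hBm : 1 ≤ B * m := Nat.one_le_iff_ne_zero.2 (by positivity)
  have hdivB : (t * B + r) / B = t := by
    rw [add_comm, mul_comm, Nat.add_mul_div_left _ _ hB, Nat.div_eq_of_lt hr, zero_add]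
  have hdiv : (t * B + r) / (B * m) = t / m := by
    rw [← Nat.div_div_eq_div_mul, hdivB]
  rw [Sfun_eq _ _ hBm, Sfun_eq m t hm, hdiv]
  have hterm : ∀ d ∈ Finset.Icc 1 (t / m), t * B + r - d * (B * m) = B * (t - d * m) + r := by
    intro d hd
    simp only [mem_Icc] at hd
    have h1 : d * m ≤ t := (Nat.le_div_iff_mul_le hm).1 hd.2
    have h2 : d * (B * m) = (d * m) * B := by ring
    have h3 : B * (t - d * m) = t * B - d * m * B := by rw [mul_comm, Nat.sub_mul]
    have h4 : d * m * B ≤ t * B := Nat.mul_le_mul_right _ h1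
    omega
  rw [Finset.sum_congr rfl hterm, Finset.sum_add_distrib, ← Finset.mul_sum,
    Finset.sum_const, Nat.card_Icc, smul_eq_mul]
  simp [mul_comm]

lemma card_mod_filter (m n : ℕ) :
    ((Finset.range n).filter fun i => i % m = n % m).card = n / m := by
  rw [← Nat.Ioc_filter_dvd_card_eq_div n m]
  apply Finset.card_bij' (fun i _ => n - i) (fun t _ => n - t)
  · intro i hi
    simp only [mem_filter, mem_range] at hi
    simp only [mem_filter, mem_Ioc]
    have hd : m ∣ n - i := (Nat.modEq_iff_dvd' (le_of_lt hi.1)).1 hi.2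
    exact ⟨⟨by omega, by omega⟩, hd⟩
  · intro t ht
    simp only [mem_filter, mem_Ioc] at ht
    simp only [mem_filter, mem_range]
    constructor
    · omega
    · have : n - (n - t) = t := by omega
      have h2 : (n - t) ≡ n [MOD m] := by
        rw [Nat.modEq_iff_dvd' (by omega)]
        rw [this]
        exact ht.2
      exact h2
  · intro i hi
    simp only [mem_filter, mem_range] at hi
    omega
  · intro t ht
    simp only [mem_filter, mem_Ioc] at ht
    omega

lemma Cpairs_eq_sum_s13 (m n : ℕ) :
    Cpairs m n = ∑ i ∈ Finset.range n, ∑ j ∈ Finset.range n,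
      if i % m = j % m then 1 else 0 := by
  rw [Cpairs, Finset.card_filter, Finset.sum_product]

lemma Cpairs_closed (m n : ℕ) (hm : 1 ≤ m) : Cpairs m n = n + 2 * Sfun m n := by
  induction n with
  | zero => simp [Cpairs, Sfun]
  | succ n ih =>
    have hstep : Cpairs m (n + 1) = Cpairs m n + 2 * (n / m) + 1 := by
      rw [Cpairs_eq_sum_s13, Cpairs_eq_sum_s13]
      rw [Finset.sum_range_succ]
      have hin : ∀ i : ℕ, ∑ j ∈ Finset.range (n+1), (if i % m = j % m then (1:ℕ) else 0)
          = (∑ j ∈ Finset.range n, if i % m = j % m then 1 else 0)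
            + (if i % m = n % m then 1 else 0) := fun i => Finset.sum_range_succ _ n
      simp only [hin]
      rw [Finset.sum_add_distrib]
      have hA : ∑ i ∈ Finset.range n, (if i % m = n % m then (1:ℕ) else 0)
          = n / m := by
        rw [← Finset.card_filter]; exact card_mod_filter m n
      have hB : ∑ j ∈ Finset.range n, (if n % m = j % m then (1:ℕ) else 0)
          = n / m := by
        rw [← hA]
        apply Finset.sum_congr rfl
        intro j _
        exact if_congr ⟨Eq.symm, Eq.symm⟩ rfl rfl
      rw [hA, hB, if_pos trivial]
      omega
    rw [hstep, ih, Sfun_succ m n hm]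
    ring

lemma sum_Icc_id_real (q : ℕ) : ∑ d ∈ Finset.Icc 1 q, (d : ℝ) = q * (q + 1) / 2 := by
  induction q with
  | zero => simp
  | succ q ih =>
    rw [← Finset.insert_Icc_right_eq_Icc_add_one (by omega), Finset.sum_insert (by simp), ih]
    push_cast
    ring

lemma Sfun_cast (m t : ℕ) (hm : 1 ≤ m) :
    (Sfun m t : ℝ) = ((t / m : ℕ) : ℝ) * t
      - m * (((t / m : ℕ) : ℝ) * (((t / m : ℕ) : ℝ) + 1) / 2) := by
  rw [Sfun_eq m t hm, Nat.cast_sum]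
  have h1 : ∀ d ∈ Finset.Icc 1 (t / m), ((t - d * m : ℕ) : ℝ) = (t : ℝ) - d * m := by
    intro d hd
    simp only [mem_Icc] at hd
    have : d * m ≤ t := (Nat.le_div_iff_mul_le hm).1 hd.2
    push_cast [this]
    ring
  rw [Finset.sum_congr rfl h1, Finset.sum_sub_distrib, Finset.sum_const, Nat.card_Icc]
  have h2 : ∑ d ∈ Finset.Icc 1 (t / m), ((d : ℝ) * m) = (∑ d ∈ Finset.Icc 1 (t / m), (d:ℝ)) * m :=
    (Finset.sum_mul _ _ _).symm
  rw [h2, sum_Icc_id_real]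
  push_cast
  ring

lemma Sfun_approx (m t : ℕ) (hm : 1 ≤ m) :
    |(Sfun m t : ℝ) - ((t : ℝ)^2 / (2 * m) - (t : ℝ) / 2)| ≤ (m : ℝ) := by
  have hq := Nat.div_add_mod t m
  have hr : t % m < m := Nat.mod_lt t hm
  have hmR : (0:ℝ) < m := by exact_mod_cast hm
  have ht : (t : ℝ) = m * ((t / m : ℕ) : ℝ) + ((t % m : ℕ) : ℝ) := by exact_mod_cast hq.symm
  have hrR : ((t % m : ℕ) : ℝ) < m := by exact_mod_cast hr
  have hrR0 : (0:ℝ) ≤ ((t % m : ℕ) : ℝ) := by positivity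
  have hq0 : (0:ℝ) ≤ ((t / m : ℕ) : ℝ) := by positivity
  rw [Sfun_cast m t hm]
  set q : ℝ := ((t / m : ℕ) : ℝ)
  set r : ℝ := ((t % m : ℕ) : ℝ)
  have key : (q * t - (m:ℝ) * (q * (q + 1) / 2) - ((t:ℝ)^2 / (2 * m) - (t:ℝ) / 2)) * (2 * m)
      = r * (m - r) := by
    rw [ht]
    field_simp
    ring
  rw [abs_le]
  constructor
  · nlinarith [key, mul_nonneg hrR0 (sub_nonneg.2 hrR.le), hmR]
  · nlinarith [key, hrR, hrR0, hmR, mul_le_mul_of_nonneg_left hrR.le hrR0]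

/-- The summand weights for the direct expansion. -/
noncomputable def Wf (b : ℕ → ℕ) (u : Finset ℕ) (c t : ℕ) : ℝ :=
  ∑ v ∈ u.powerset,
    (∏ j ∈ v, (b j : ℝ)) * (-1) ^ (u \ v).card * (Sfun (c * ∏ j ∈ v, b j) t : ℝ)

lemma sum_H (b : ℕ → ℕ) (u : Finset ℕ) :
    ∑ v ∈ u.powerset, (∏ j ∈ v, (b j : ℝ)) * (-1) ^ (u \ v).card
      = ∏ j ∈ u, ((b j : ℝ) - 1) := by
  have h := Finset.prod_add (fun j => (b j : ℝ)) (fun _ => (-1 : ℝ)) u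
  simp only [Finset.prod_const] at h
  have h2 : ∏ j ∈ u, ((b j : ℝ) - 1) = ∏ j ∈ u, ((b j : ℝ) + (-1)) := by
    apply Finset.prod_congr rfl; intros; ring
  rw [h2, h]

lemma sum_sign (u : Finset ℕ) (hu : u.Nonempty) :
    ∑ v ∈ u.powerset, ((-1 : ℝ)) ^ (u \ v).card = 0 := by
  have h := Finset.prod_add (fun _ => (1 : ℝ)) (fun _ => (-1 : ℝ)) u
  simp only [Finset.prod_const, one_pow, one_mul] at h
  rw [← h]
  norm_num [zero_pow (Finset.card_ne_zero.2 hu)]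

lemma mProd_eq (b k : ℕ → ℕ) (u v : Finset ℕ) (hv : v ⊆ u) :
    mProd b k u v = (∏ j ∈ u, b j ^ k j) * ∏ j ∈ v, b j := by
  rw [mProd, ← Finset.prod_sdiff hv (f := fun j => b j ^ k j)]
  have h1 : ∏ j ∈ v, b j ^ (k j + 1) = (∏ j ∈ v, b j ^ k j) * ∏ j ∈ v, b j := by
    rw [← Finset.prod_mul_distrib]
    apply Finset.prod_congr rfl
    intros; rw [pow_succ]
  rw [h1]; ring

lemma mv_pos (b : ℕ → ℕ) (u v : Finset ℕ) (hb : ∀ j ∈ u, 1 ≤ b j) (hv : v ⊆ u) :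
    1 ≤ ∏ j ∈ v, b j :=
  Nat.one_le_iff_ne_zero.2 (Nat.pos_iff_ne_zero.1 (Finset.prod_pos fun j hj => hb j (hv hj)))

lemma B_pos (b k : ℕ → ℕ) (u : Finset ℕ) (hb : ∀ j ∈ u, 1 ≤ b j) :
    1 ≤ ∏ j ∈ u, b j ^ k j :=
  Nat.one_le_iff_ne_zero.2 (Nat.pos_iff_ne_zero.1
    (Finset.prod_pos fun j hj => Nat.pow_pos (hb j hj)))

lemma Gt_eq (b k : ℕ → ℕ) (u : Finset ℕ) (hb : ∀ j ∈ u, 1 ≤ b j) (n : ℕ) :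
    Gt b k u n = (n : ℝ) * (∏ j ∈ u, ((b j : ℝ) - 1))
      + 2 * Wf b u (∏ j ∈ u, b j ^ k j) n := by
  rw [Gt, Wf, Finset.mul_sum]
  have h1 : ∀ v ∈ u.powerset,
      (∏ j ∈ v, (b j : ℝ)) * (-1) ^ (u \ v).card * (Cpairs (mProd b k u v) n : ℝ)
      = (∏ j ∈ v, (b j : ℝ)) * (-1) ^ (u \ v).card * (n : ℝ)
        + 2 * ((∏ j ∈ v, (b j : ℝ)) * (-1) ^ (u \ v).card
            * (Sfun ((∏ j ∈ u, b j ^ k j) * ∏ j ∈ v, b j) n : ℝ)) := by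
    intro v hv
    rw [Finset.mem_powerset] at hv
    have hm : 1 ≤ mProd b k u v := by
      rw [mProd_eq b k u v hv]
      simpa using Nat.mul_le_mul (B_pos b k u hb) (mv_pos b u v hb hv)
    rw [Cpairs_closed _ _ hm, mProd_eq b k u v hv]
    push_cast
    ring
  rw [Finset.sum_congr rfl h1, Finset.sum_add_distrib]
  congr 1
  rw [← Finset.sum_mul, sum_H]
  ring

lemma Wf_zero (b : ℕ → ℕ) (u : Finset ℕ) (c : ℕ) : Wf b u c 0 = 0 := by
  simp [Wf, Sfun]

lemma Wf_scale (b : ℕ → ℕ) (u : Finset ℕ) (hb : ∀ j ∈ u, 1 ≤ b j) (B n : ℕ) (hB : 1 ≤ B) :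
    Wf b u B n = ((B : ℝ) - ((n % B : ℕ) : ℝ)) * Wf b u 1 (n / B)
      + ((n % B : ℕ) : ℝ) * Wf b u 1 (n / B + 1) := by
  rw [Wf, Wf, Wf, Finset.mul_sum, Finset.mul_sum, ← Finset.sum_add_distrib]
  apply Finset.sum_congr rfl
  intro v hv
  rw [Finset.mem_powerset] at hv
  have hm : 1 ≤ ∏ j ∈ v, b j := mv_pos b u v hb hv
  set m := ∏ j ∈ v, b j with hmdef
  have h1 : Sfun (B * m) n = B * Sfun m (n / B) + (n % B) * ((n / B) / m) := by
    have h := Sfun_scale m B (n / B) (n % B) hm hB (Nat.mod_lt _ hB)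
    have hn : n / B * B + n % B = n := by
      rw [mul_comm]; exact Nat.div_add_mod n B
    rwa [hn] at h
  have h2 : Sfun (1 * m) (n / B + 1) = Sfun (1 * m) (n / B) + (n / B) / m := by
    rw [one_mul]; exact Sfun_succ m (n / B) hm
  have h3 : (1 : ℕ) * m = m := one_mul m
  have e1 : (Sfun (B * m) n : ℝ)
      = (B : ℝ) * (Sfun m (n / B) : ℝ) + ((n % B : ℕ) : ℝ) * (((n / B) / m : ℕ) : ℝ) := by
    rw [h1]; push_cast; ring
  have e2 : (Sfun (1 * m) (n / B + 1) : ℝ)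
      = (Sfun m (n / B) : ℝ) + (((n / B) / m : ℕ) : ℝ) := by
    rw [h2, h3]; push_cast; ring
  rw [e1, e2, h3]
  ring

lemma Wf_le (b : ℕ → ℕ) (u : Finset ℕ) (hu : u.Nonempty) (hb : ∀ j ∈ u, 2 ≤ b j) (t : ℕ) :
    Wf b u 1 t ≤ ∑ v ∈ u.powerset, (∏ j ∈ v, (b j : ℝ))^2 := by
  have hb1 : ∀ j ∈ u, 1 ≤ b j := fun j hj => le_trans one_le_two (hb j hj)
  have hP : (0:ℝ) ≤ ∏ j ∈ u, ((b j : ℝ) - 1) := by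
    apply Finset.prod_nonneg
    intro j hj
    have := hb j hj
    have : (2:ℝ) ≤ (b j : ℝ) := by exact_mod_cast this
    linarith
  have key : ∀ v ∈ u.powerset,
      (∏ j ∈ v, (b j : ℝ)) * (-1) ^ (u \ v).card * (Sfun (1 * ∏ j ∈ v, b j) t : ℝ)
      ≤ (-1) ^ (u \ v).card * ((t : ℝ)^2 / 2)
        - ((∏ j ∈ v, (b j : ℝ)) * (-1) ^ (u \ v).card) * ((t : ℝ) / 2)
        + (∏ j ∈ v, (b j : ℝ))^2 := by
    intro v hv
    rw [Finset.mem_powerset] at hv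
    have hm : 1 ≤ ∏ j ∈ v, b j := mv_pos b u v hb1 hv
    have hcast : ((∏ j ∈ v, b j : ℕ) : ℝ) = ∏ j ∈ v, (b j : ℝ) := by push_cast; rfl
    have hmR : (0:ℝ) < ∏ j ∈ v, (b j : ℝ) := by
      rw [← hcast]; exact_mod_cast hm
    have happ := Sfun_approx (∏ j ∈ v, b j) t hm
    rw [abs_le, hcast] at happ
    obtain ⟨hlo, hhi⟩ := happ
    set mv : ℝ := ∏ j ∈ v, (b j : ℝ)
    set S : ℝ := (Sfun (1 * ∏ j ∈ v, b j) t : ℝ) with hS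
    have hSS : S = (Sfun (∏ j ∈ v, b j) t : ℝ) := by rw [hS, one_mul]
    rw [hSS] at *
    have hexp : mv * ((t : ℝ)^2 / (2 * mv) - (t:ℝ) / 2 + mv)
        = (t:ℝ)^2/2 - mv * ((t:ℝ)/2) + mv^2 := by
      field_simp
    have hexp2 : mv * ((t : ℝ)^2 / (2 * mv) - (t:ℝ) / 2 - mv)
        = (t:ℝ)^2/2 - mv * ((t:ℝ)/2) - mv^2 := by
      field_simp
    rcases Nat.even_or_odd (u \ v).card with he | ho
    · rw [he.neg_one_pow]
      have h1 : (Sfun (∏ j ∈ v, b j) t : ℝ) ≤ (t : ℝ)^2 / (2 * mv) - (t:ℝ)/2 + mv := by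
        linarith
      have h2 := mul_le_mul_of_nonneg_left h1 hmR.le
      rw [hexp] at h2
      calc mv * 1 * (Sfun (∏ j ∈ v, b j) t : ℝ) = mv * (Sfun (∏ j ∈ v, b j) t : ℝ) := by ring
        _ ≤ (t:ℝ)^2/2 - mv * ((t:ℝ)/2) + mv^2 := h2
        _ = 1 * ((t : ℝ)^2 / 2) - mv * 1 * ((t:ℝ)/2) + mv^2 := by ring
    · rw [ho.neg_one_pow]
      have h1 : (t : ℝ)^2 / (2 * mv) - (t:ℝ)/2 - mv ≤ (Sfun (∏ j ∈ v, b j) t : ℝ) := by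
        linarith
      have h2 := mul_le_mul_of_nonneg_left h1 hmR.le
      rw [hexp2] at h2
      calc mv * (-1) * (Sfun (∏ j ∈ v, b j) t : ℝ)
          = -(mv * (Sfun (∏ j ∈ v, b j) t : ℝ)) := by ring
        _ ≤ -((t:ℝ)^2/2 - mv * ((t:ℝ)/2) - mv^2) := by linarith
        _ = (-1) * ((t : ℝ)^2 / 2) - mv * (-1) * ((t:ℝ)/2) + mv^2 := by ring
  calc Wf b u 1 t ≤ ∑ v ∈ u.powerset, ((-1) ^ (u \ v).card * ((t : ℝ)^2 / 2)
        - ((∏ j ∈ v, (b j : ℝ)) * (-1) ^ (u \ v).card) * ((t : ℝ) / 2)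
        + (∏ j ∈ v, (b j : ℝ))^2) := Finset.sum_le_sum key
    _ = (∑ v ∈ u.powerset, ((-1:ℝ)) ^ (u \ v).card) * ((t : ℝ)^2 / 2)
        - (∑ v ∈ u.powerset, (∏ j ∈ v, (b j : ℝ)) * (-1) ^ (u \ v).card) * ((t : ℝ) / 2)
        + ∑ v ∈ u.powerset, (∏ j ∈ v, (b j : ℝ))^2 := by
      rw [Finset.sum_add_distrib, Finset.sum_sub_distrib, Finset.sum_mul, Finset.sum_mul]
    _ = - (∏ j ∈ u, ((b j : ℝ) - 1)) * ((t : ℝ) / 2)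
        + ∑ v ∈ u.powerset, (∏ j ∈ v, (b j : ℝ))^2 := by
      rw [sum_sign u hu, sum_H]
      ring
    _ ≤ ∑ v ∈ u.powerset, (∏ j ∈ v, (b j : ℝ))^2 := by
      have ht0 : (0:ℝ) ≤ (t:ℝ) := by positivity
      nlinarith

theorem stmt13 (u : Finset ℕ) (hu : u.Nonempty) (b k : ℕ → ℕ)
    (hb : ∀ j ∈ u, 2 ≤ b j)
    (hcop : ∀ i ∈ u, ∀ j ∈ u, i ≠ j → Nat.Coprime (b i) (b j)) :
    sSup {x : ℝ | ∃ n : ℕ, 1 ≤ n ∧ x = Gn b k u n} =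
      sSup {x : ℝ | ∃ n : ℕ, 1 ≤ n ∧ x = Gn b (fun _ => 0) u n} := by
  classical
  have hb1 : ∀ j ∈ u, 1 ≤ b j := fun j hj => le_trans one_le_two (hb j hj)
  set P : ℝ := ∏ j ∈ u, ((b j : ℝ) - 1) with hPdef
  have hP : 0 < P := by
    rw [hPdef]
    apply Finset.prod_pos
    intro j hj
    have : (2:ℝ) ≤ (b j : ℝ) := by exact_mod_cast hb j hj
    linarith
  set B : ℕ := ∏ j ∈ u, b j ^ k j with hBdef
  have hB : 1 ≤ B := B_pos b k u hb1
  have hBR : (1:ℝ) ≤ (B:ℝ) := by exact_mod_cast hB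
  have hGn0 : ∀ n : ℕ, Gn b (fun _ => 0) u n = ((n:ℝ) * P + 2 * Wf b u 1 n) / ((n:ℝ) * P) := by
    intro n
    simp only [Gn]
    rw [Gt_eq b (fun _ => 0) u hb1 n]
    simp only [pow_zero, Finset.prod_const_one]
    rw [← hPdef]
  have hGnk : ∀ n : ℕ, Gn b k u n = ((n:ℝ) * P + 2 * Wf b u B n) / ((n:ℝ) * P) := by
    intro n
    simp only [Gn]
    rw [Gt_eq b k u hb1 n, ← hPdef, ← hBdef]
  set S0 := {x : ℝ | ∃ n : ℕ, 1 ≤ n ∧ x = Gn b (fun _ => 0) u n} with hS0def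
  set Cb : ℝ := ∑ v ∈ u.powerset, (∏ j ∈ v, (b j : ℝ))^2 with hCbdef
  have hCb0 : 0 ≤ Cb := Finset.sum_nonneg fun v _ => sq_nonneg _
  have hS0ne : S0.Nonempty := ⟨Gn b (fun _ => 0) u 1, 1, le_refl 1, rfl⟩
  have hub0 : ∀ x ∈ S0, x ≤ (P + 2 * Cb) / P := by
    rintro x ⟨n, hn, rfl⟩
    rw [hGn0 n]
    have hnR : (1:ℝ) ≤ (n:ℝ) := by exact_mod_cast hn
    have hnP : 0 < (n:ℝ) * P := by nlinarith
    rw [div_le_div_iff₀ hnP hP]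
    have hW : Wf b u 1 n ≤ Cb := Wf_le b u hu hb n
    have e1 : Wf b u 1 n * P ≤ Cb * P := mul_le_mul_of_nonneg_right hW hP.le
    have e2 : 0 ≤ Cb * P * ((n:ℝ) - 1) := by
      apply mul_nonneg (mul_nonneg hCb0 hP.le)
      linarith
    nlinarith [e1, e2]
  have hbdd0 : BddAbove S0 := ⟨(P + 2 * Cb) / P, hub0⟩
  set M : ℝ := sSup S0 with hMdef
  have hW1le : ∀ t : ℕ, Wf b u 1 t ≤ (t:ℝ) * (P * (M - 1) / 2) := by
    intro t
    rcases Nat.eq_zero_or_pos t with rfl | ht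
    · rw [Wf_zero]; simp
    · have hmem : Gn b (fun _ => 0) u t ∈ S0 := ⟨t, ht, rfl⟩
      have hle : Gn b (fun _ => 0) u t ≤ M := le_csSup hbdd0 hmem
      rw [hGn0 t] at hle
      have htR : (1:ℝ) ≤ (t:ℝ) := by exact_mod_cast ht
      have htP : 0 < (t:ℝ) * P := by nlinarith
      rw [div_le_iff₀ htP] at hle
      have heq : (t:ℝ) * (P * (M - 1) / 2) * 2 = M * ((t:ℝ) * P) - (t:ℝ) * P := by ring
      linarith
  have hkey : ∀ n : ℕ, 1 ≤ n → Gn b k u n ≤ M := by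
    intro n hn
    rw [hGnk n]
    have hnR : (1:ℝ) ≤ (n:ℝ) := by exact_mod_cast hn
    have hnP : 0 < (n:ℝ) * P := by nlinarith
    rw [div_le_iff₀ hnP]
    have hdec := Wf_scale b u hb1 B n hB
    have h1 := hW1le (n / B)
    have h2 := hW1le (n / B + 1)
    have hrlt : n % B < B := Nat.mod_lt _ hB
    have hrR : ((n % B : ℕ):ℝ) < (B:ℝ) := by exact_mod_cast hrlt
    have hr0 : (0:ℝ) ≤ ((n % B : ℕ):ℝ) := by positivity
    have hnB : n / B * B + n % B = n := by
      rw [mul_comm]; exact Nat.div_add_mod n B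
    have hnBR : ((n / B : ℕ):ℝ) * (B:ℝ) + ((n % B : ℕ):ℝ) = (n:ℝ) := by
      exact_mod_cast congrArg (Nat.cast (R := ℝ)) hnB
    have e1 : ((B:ℝ) - ((n % B : ℕ):ℝ)) * Wf b u 1 (n / B)
        ≤ ((B:ℝ) - ((n % B : ℕ):ℝ)) * (((n / B : ℕ):ℝ) * (P * (M - 1) / 2)) :=
      mul_le_mul_of_nonneg_left h1 (by linarith)
    have e2 : ((n % B : ℕ):ℝ) * Wf b u 1 (n / B + 1)
        ≤ ((n % B : ℕ):ℝ) * ((((n / B : ℕ):ℝ) + 1) * (P * (M - 1) / 2)) := by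
      have h3 := mul_le_mul_of_nonneg_left h2 hr0
      have h4 : (((n / B + 1 : ℕ)):ℝ) = ((n / B : ℕ):ℝ) + 1 := by push_cast; ring
      rwa [h4] at h3
    have hWfn : Wf b u B n ≤ (n:ℝ) * (P * (M - 1) / 2) := by
      rw [hdec]
      have hsum : ((B:ℝ) - ((n % B : ℕ):ℝ)) * (((n / B : ℕ):ℝ) * (P * (M - 1) / 2))
          + ((n % B : ℕ):ℝ) * ((((n / B : ℕ):ℝ) + 1) * (P * (M - 1) / 2))
          = (n:ℝ) * (P * (M - 1) / 2) := by
        rw [← hnBR]; ring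
      linarith
    have heq : (n:ℝ) * P + 2 * ((n:ℝ) * (P * (M - 1) / 2)) = M * ((n:ℝ) * P) := by ring
    linarith
  have hsub : S0 ⊆ {x : ℝ | ∃ n : ℕ, 1 ≤ n ∧ x = Gn b k u n} := by
    rintro x ⟨n, hn, rfl⟩
    refine ⟨n * B, by simpa using Nat.mul_le_mul hn hB, ?_⟩
    rw [hGn0 n, hGnk (n * B)]
    have hBpos : 0 < B := hB
    have hq : (n * B) / B = n := Nat.mul_div_cancel n hBpos
    have hmod : (n * B) % B = 0 := Nat.mul_mod_left n B
    have hWnB : Wf b u B (n * B) = (B:ℝ) * Wf b u 1 n := by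
      rw [Wf_scale b u hb1 B (n * B) hB, hq, hmod]
      push_cast
      ring
    rw [hWnB]
    have hnR : (1:ℝ) ≤ (n:ℝ) := by exact_mod_cast hn
    have hnP : 0 < (n:ℝ) * P := by nlinarith
    have hnBP : 0 < ((n * B : ℕ):ℝ) * P := by
      have : ((n * B : ℕ):ℝ) = (n:ℝ) * (B:ℝ) := by push_cast; ring
      rw [this]; nlinarith
    rw [div_eq_div_iff hnP.ne' hnBP.ne']
    have hc : ((n * B : ℕ):ℝ) = (n:ℝ) * (B:ℝ) := by push_cast; ring
    rw [hc]
    ring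
  have hbddk : BddAbove {x : ℝ | ∃ n : ℕ, 1 ≤ n ∧ x = Gn b k u n} := by
    refine ⟨M, ?_⟩
    rintro x ⟨n, hn, rfl⟩
    exact hkey n hn
  apply le_antisymm
  · refine csSup_le ⟨Gn b k u 1, ⟨1, le_refl 1, rfl⟩⟩ ?_
    rintro x ⟨n, hn, rfl⟩
    exact hkey n hn
  · exact csSup_le_csSup hbddk hS0ne hsub
end

section
/- Let u = v ∪ {j*} with j* ∉ v, v nonempty. Then for n divisible by b_{j*}: G̃_{u,0}(n) = b_{j*}²·G̃_{v,0}(n/b_{j*}) − G̃_{v,0}(n), and after normalization G_{u,0}(n) = (b_{j*}/(b_{j*}−1))·G_{v,0}(n/b_{j*}) − (1/(b_{j*}−1))·G_{v,0}(n). -/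
lemma mod_mul_decomp (b m j c : ℕ) (hc : c < b) :
    (b * j + c) % (b * m) = b * (j % m) + c := by
  rcases Nat.eq_zero_or_pos m with rfl | hm
  · simp
  · have key : b * (j % m) + c < b * m := by
      have h1 : j % m + 1 ≤ m := Nat.mod_lt j hm
      calc b * (j % m) + c < b * (j % m) + b := by omega
        _ = b * (j % m + 1) := by ring
        _ ≤ b * m := Nat.mul_le_mul_left b h1
    conv_lhs => rw [← Nat.div_add_mod j m]
    rw [Nat.mul_add, ← Nat.mul_assoc, Nat.add_assoc, Nat.mul_add_mod, Nat.mod_eq_of_lt key]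

lemma Cpairs_mul (b m n : ℕ) (hb : 0 < b) (hdvd : b ∣ n) :
    Cpairs (b * m) n = b * Cpairs m (n / b) := by
  obtain ⟨q, rfl⟩ := hdvd
  rw [Nat.mul_div_cancel_left q hb]
  have hcard : ((Finset.range (b*q) ×ˢ Finset.range (b*q)).filter
        fun p => p.1 % (b*m) = p.2 % (b*m)).card =
      (Finset.range b ×ˢ ((Finset.range q ×ˢ Finset.range q).filter
        fun p => p.1 % m = p.2 % m)).card := by
    apply Finset.card_nbij' (fun p => (p.1 % b, (p.1 / b, p.2 / b)))
      (fun p => (b * p.2.1 + p.1, b * p.2.2 + p.1))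
    · intro p hp
      simp only [Finset.mem_coe, Finset.mem_filter, Finset.mem_product, Finset.mem_range] at hp ⊢
      obtain ⟨⟨h1, h2⟩, h3⟩ := hp
      refine ⟨Nat.mod_lt _ hb, ⟨?_, ?_⟩, ?_⟩
      · exact Nat.div_lt_of_lt_mul h1
      · exact Nat.div_lt_of_lt_mul h2
      · have e1 : p.1 / b % m = p.1 % (b * m) / b := (Nat.mod_mul_right_div_self p.1 b m).symm
        have e2 : p.2 / b % m = p.2 % (b * m) / b := (Nat.mod_mul_right_div_self p.2 b m).symm
        rw [e1, e2, h3]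
    · intro p hp
      simp only [Finset.mem_coe, Finset.mem_filter, Finset.mem_product, Finset.mem_range] at hp ⊢
      obtain ⟨h1, ⟨h2, h3⟩, h4⟩ := hp
      refine ⟨⟨?_, ?_⟩, ?_⟩
      · calc b * p.2.1 + p.1 < b * p.2.1 + b := by omega
          _ = b * (p.2.1 + 1) := by ring
          _ ≤ b * q := Nat.mul_le_mul_left b h2
      · calc b * p.2.2 + p.1 < b * p.2.2 + b := by omega
          _ = b * (p.2.2 + 1) := by ring
          _ ≤ b * q := Nat.mul_le_mul_left b h3
      · rw [mod_mul_decomp b m _ _ h1, mod_mul_decomp b m _ _ h1, h4]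
    · intro p hp
      simp only [Finset.mem_coe, Finset.mem_filter, Finset.mem_product, Finset.mem_range] at hp
      obtain ⟨-, h3⟩ := hp
      have hmm : p.1 % b = p.2 % b := by
        have d : b ∣ b * m := ⟨m, rfl⟩
        rw [← Nat.mod_mod_of_dvd p.1 d, h3, Nat.mod_mod_of_dvd p.2 d]
      have e1 : b * (p.1 / b) + p.1 % b = p.1 := Nat.div_add_mod p.1 b
      have e2 : b * (p.2 / b) + p.1 % b = p.2 := by rw [hmm]; exact Nat.div_add_mod p.2 b
      rw [Prod.ext_iff]
      exact ⟨e1, e2⟩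
    · intro p hp
      simp only [Finset.mem_coe, Finset.mem_product, Finset.mem_filter, Finset.mem_range] at hp
      obtain ⟨h1, _⟩ := hp
      simp [Nat.mul_add_mod, Nat.mod_eq_of_lt h1, Nat.mul_add_div hb, Nat.div_eq_of_lt h1]
  unfold Cpairs
  rw [hcard, Finset.card_product, Finset.card_range]

theorem stmt14 (v : Finset ℕ) (hv : v.Nonempty) (b : ℕ → ℕ) (jstar : ℕ)
    (hjv : jstar ∉ v) (u : Finset ℕ) (hu : u = insert jstar v)
    (hb : ∀ j ∈ u, 2 ≤ b j)
    (hcop : ∀ i ∈ u, ∀ j ∈ u, i ≠ j → Nat.Coprime (b i) (b j))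
    (n : ℕ) (hn : 1 ≤ n) (hdvd : b jstar ∣ n) :
    Gt b (fun _ => 0) u n =
        (b jstar : ℝ) ^ 2 * Gt b (fun _ => 0) v (n / b jstar) - Gt b (fun _ => 0) v n ∧
      Gn b (fun _ => 0) u n =
        ((b jstar : ℝ) / ((b jstar : ℝ) - 1)) * Gn b (fun _ => 0) v (n / b jstar)
          - (1 / ((b jstar : ℝ) - 1)) * Gn b (fun _ => 0) v n := by

  subst hu
  have hbj : 2 ≤ b jstar := hb jstar (Finset.mem_insert_self _ _)
  have hbj0 : 0 < b jstar := by omega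
  have hmv : ∀ s : Finset ℕ, s ⊆ v → ∀ w, mProd b (fun _ => 0) w s = ∏ j ∈ s, b j := by
    intro s hs w
    simp [mProd]
  have h1 : Gt b (fun _ => 0) (insert jstar v) n =
      (b jstar : ℝ) ^ 2 * Gt b (fun _ => 0) v (n / b jstar) - Gt b (fun _ => 0) v n := by
    have e1 : (∑ s ∈ v.powerset, (∏ j ∈ s, (b j : ℝ)) * (-1) ^ (insert jstar v \ s).card *
        (Cpairs (mProd b (fun _ => 0) (insert jstar v) s) n : ℝ)) = - Gt b (fun _ => 0) v n := by
      unfold Gt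
      rw [← Finset.sum_neg_distrib]
      apply Finset.sum_congr rfl
      intro s hs
      rw [Finset.mem_powerset] at hs
      have hjs : jstar ∉ s := fun h => hjv (hs h)
      have hsd : insert jstar v \ s = insert jstar (v \ s) := by
        rw [Finset.insert_sdiff_of_notMem _ hjs]
      have hc : (insert jstar v \ s).card = (v \ s).card + 1 := by
        rw [hsd, Finset.card_insert_of_notMem (fun h => hjv (Finset.mem_sdiff.mp h).1)]
      rw [hmv s hs (insert jstar v), hmv s hs v, hc]
      ring
    have e2 : (∑ s ∈ v.powerset, (∏ j ∈ insert jstar s, (b j : ℝ)) *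
        (-1) ^ (insert jstar v \ insert jstar s).card *
        (Cpairs (mProd b (fun _ => 0) (insert jstar v) (insert jstar s)) n : ℝ)) =
        (b jstar : ℝ) ^ 2 * Gt b (fun _ => 0) v (n / b jstar) := by
      unfold Gt
      rw [Finset.mul_sum]
      apply Finset.sum_congr rfl
      intro s hs
      rw [Finset.mem_powerset] at hs
      have hjs : jstar ∉ s := fun h => hjv (hs h)
      have hsd : insert jstar v \ insert jstar s = v \ s := by
        ext x
        simp only [Finset.mem_sdiff, Finset.mem_insert]
        constructor
        · rintro ⟨hx1 | hx2, hx3⟩ <;> tauto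
        · rintro ⟨hx1, hx2⟩
          exact ⟨Or.inr hx1, fun h => h.elim (fun he => hjv (he ▸ hx1)) hx2⟩
      have hmins : mProd b (fun _ => 0) (insert jstar v) (insert jstar s)
          = b jstar * ∏ j ∈ s, b j := by
        simp [mProd, Finset.prod_insert hjs]
      rw [hmins, Cpairs_mul _ _ _ hbj0 hdvd, hsd, hmv s hs v,
        Finset.prod_insert hjs]
      push_cast
      ring
    conv_lhs => rw [Gt]
    rw [Finset.sum_powerset_insert hjv, e1, e2]
    ring
  refine ⟨h1, ?_⟩
  have hn0 : (n : ℝ) ≠ 0 := Nat.cast_ne_zero.mpr (by omega)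
  have hB0 : (b jstar : ℝ) ≠ 0 := Nat.cast_ne_zero.mpr (by omega)
  have hB2 : (2 : ℝ) ≤ (b jstar : ℝ) := by exact_mod_cast hbj
  have hB1 : (b jstar : ℝ) - 1 ≠ 0 := by linarith
  have hP : (∏ j ∈ v, ((b j : ℝ) - 1)) ≠ 0 := by
    apply Finset.prod_ne_zero_iff.mpr
    intro j hj
    have : 2 ≤ b j := hb j (Finset.mem_insert_of_mem hj)
    have : (2 : ℝ) ≤ (b j : ℝ) := by exact_mod_cast this
    linarith
  have hcast : ((n / b jstar : ℕ) : ℝ) = (n : ℝ) / (b jstar : ℝ) := by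
    rw [Nat.cast_div hdvd hB0]
  unfold Gn
  rw [Finset.prod_insert hjv, h1, hcast]
  field_simp
end
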